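/- Let S be a commutative semiring (possibly without unit) and F a field. Then every ideal of S × F is directly decomposable; more precisely, each ideal I of S × F equals π₁(I) × {0} or π₁(I) × F, where π₁(I) denotes the image of I under the first projection. -/
import Mathlib


/-- An ideal of a (possibly non-unital) commutative semiring. -/
def IsSemiringIdeal {S : Type*} [NonUnitalCommSemiring S] (I : Set S) : Prop :=
  (0 : S) ∈ I ∧ (∀ a b : S, a ∈ I → b ∈ I → a + b ∈ I) ∧ (∀ a s : S, a ∈ I → a * s ∈ I)

theorem stmt_9 {S F : Type*} [NonUnitalCommSemiring S] [Field F]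
    (I : Set (S × F)) (hI : IsSemiringIdeal I) :
    (∃ I₁ : Set S, ∃ I₂ : Set F,
        IsSemiringIdeal I₁ ∧ IsSemiringIdeal I₂ ∧ I = I₁ ×ˢ I₂) ∧
      (I = (Prod.fst '' I) ×ˢ ({0} : Set F) ∨
        I = (Prod.fst '' I) ×ˢ (Set.univ : Set F)) := by
  obtain ⟨h0, hadd, hmul⟩ := hI
  set J : Set S := Prod.fst '' I with hJdef
  have hJ : IsSemiringIdeal J := by
    refine ⟨⟨(0, 0), h0, rfl⟩, ?_, ?_⟩
    · rintro a b ⟨⟨a, a2⟩, ha, rfl⟩ ⟨⟨b, b2⟩, hb, rfl⟩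
      exact ⟨(a + b, a2 + b2), hadd _ _ ha hb, rfl⟩
    · rintro a s ⟨⟨a, a2⟩, ha, rfl⟩
      exact ⟨(a * s, a2 * 0), hmul _ (s, 0) ha, rfl⟩
  by_cases hc : ∃ p ∈ I, p.2 ≠ 0
  · obtain ⟨⟨a₀, b₀⟩, hp, hb₀⟩ := hc
    have key : ∀ c : F, ((0 : S), c) ∈ I := by
      intro c
      have := hmul _ ((0 : S), b₀⁻¹ * c) hp
      simpa [mul_inv_cancel_left₀ hb₀] using this
    have heq : I = J ×ˢ (Set.univ : Set F) := by
      ext ⟨a, b⟩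
      constructor
      · intro h; exact ⟨⟨_, h, rfl⟩, trivial⟩
      · rintro ⟨⟨⟨a, b'⟩, ha, rfl⟩, -⟩
        have := hadd _ _ ha (key (b - b'))
        simpa using this
    refine ⟨⟨J, Set.univ, hJ, ⟨trivial, fun _ _ _ _ => trivial, fun _ _ _ => trivial⟩, heq⟩,
      Or.inr heq⟩
  · push_neg at hc
    have heq : I = J ×ˢ ({0} : Set F) := by
      ext ⟨a, b⟩
      constructor
      · intro h; exact ⟨⟨_, h, rfl⟩, hc _ h⟩
      · rintro ⟨⟨⟨a, b'⟩, ha, rfl⟩, hb⟩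
        have hb' : b' = 0 := hc _ ha
        simp only [Set.mem_singleton_iff] at hb
        subst hb; subst hb'; exact ha
    exact ⟨⟨J, {0}, hJ, ⟨rfl, fun a b ha hb => by simp [Set.mem_singleton_iff.mp ha,
      Set.mem_singleton_iff.mp hb], fun a s ha => by simp [Set.mem_singleton_iff.mp ha]⟩,
      heq⟩, Or.inl heq⟩
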